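/- For all peer susceptibilities α_1,…,α_n ∈ [0,1] and platform susceptibilities β_1,…,β_n ∈ [0,1], the spectral radius of the product Ψ_K Λ_β satisfies ρ(Ψ_K Λ_β) ≤ max_i β_i. In particular, if β_i < 1 for every i then ρ(Ψ_K Λ_β) < 1. -/

import Mathlib

open Matrix Filter Topology

/-- Row-normalized adjacency matrix `W = deg⁻¹ A` of a simple graph. -/
noncomputable def rowNormAdj {n : ℕ} (G : SimpleGraph (Fin n)) [DecidableRel G.Adj] :
    Matrix (Fin n) (Fin n) ℝ :=
  Matrix.of fun i j => (G.adjMatrix ℝ) i j / (G.degree i : ℝ)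

/-- The multi-step influence matrix
`Ψ_K = Σ_{k=0}^{K−1} (Λ_α W)^k (I − Λ_α) + (Λ_α W)^K`. -/
noncomputable def Psi {n : ℕ} (K : ℕ) (α : Fin n → ℝ) (W : Matrix (Fin n) (Fin n) ℝ) :
    Matrix (Fin n) (Fin n) ℝ :=
  (∑ k ∈ Finset.range K, (Matrix.diagonal α * W) ^ k * (1 - Matrix.diagonal α))
    + (Matrix.diagonal α * W) ^ K
/-- The spectral radius of a real square matrix: the maximum modulus of its
complex eigenvalues. -/
noncomputable def specRad {n : ℕ} (M : Matrix (Fin n) (Fin n) ℝ) : ℝ :=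
  sSup ((fun z : ℂ => ‖z‖) '' spectrum ℂ (M.map Complex.ofReal))

section aux
variable {n : ℕ}

lemma mul_nonneg' {M N : Matrix (Fin n) (Fin n) ℝ} (hM : ∀ i j, 0 ≤ M i j)
    (hN : ∀ i j, 0 ≤ N i j) : ∀ i j, 0 ≤ (M * N) i j := fun i j => by
  rw [Matrix.mul_apply]
  exact Finset.sum_nonneg fun k _ => mul_nonneg (hM i k) (hN k j)

lemma pow_nonneg' {M : Matrix (Fin n) (Fin n) ℝ} (hM : ∀ i j, 0 ≤ M i j) (k : ℕ) :
    ∀ i j, 0 ≤ (M ^ k) i j := by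
  induction k with
  | zero =>
      intro i j
      rw [pow_zero, Matrix.one_apply]
      split <;> norm_num
  | succ m ih => rw [pow_succ]; exact mul_nonneg' ih hM

lemma rowsum_mul (M N : Matrix (Fin n) (Fin n) ℝ) (i : Fin n) :
    ∑ j, (M * N) i j = ∑ k, M i k * ∑ j, N k j := by
  simp_rw [Matrix.mul_apply, Finset.mul_sum]
  exact Finset.sum_comm

/-- Row sums of `Psi` are all `1` when `W` is row-stochastic. -/
lemma psi_rowsum {K : ℕ} {α : Fin n → ℝ} {W : Matrix (Fin n) (Fin n) ℝ}
    (hWrs : ∀ i, ∑ j, W i j = 1) (i : Fin n) : ∑ j, Psi K α W i j = 1 := by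
  induction K with
  | zero =>
      simp only [Psi, Finset.range_zero, Finset.sum_empty, zero_add, pow_zero]
      simp [Matrix.one_apply]
  | succ m ih =>
      have hS : ∀ i, ∑ j, (Matrix.diagonal α * W) i j = α i := by
        intro i
        rw [rowsum_mul, Finset.sum_eq_single i]
        · simp [hWrs i]
        · intro b _ hb; simp [Matrix.diagonal_apply_ne' _ hb]
        · simp
      have key : Psi (m+1) α W = Psi m α W
          + (Matrix.diagonal α * W) ^ m * ((Matrix.diagonal α * W) - Matrix.diagonal α) := by
        simp only [Psi, Finset.sum_range_succ, pow_succ]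
        noncomm_ring
      rw [key]
      have : ∀ j, (Psi m α W + (Matrix.diagonal α * W) ^ m
          * ((Matrix.diagonal α * W) - Matrix.diagonal α)) i j
          = Psi m α W i j + ((Matrix.diagonal α * W) ^ m
          * ((Matrix.diagonal α * W) - Matrix.diagonal α)) i j := fun j => rfl
      simp_rw [this]
      rw [Finset.sum_add_distrib, ih, rowsum_mul]
      have hz : ∀ k, ∑ j, ((Matrix.diagonal α * W) - Matrix.diagonal α) k j = 0 := by
        intro k
        have : ∀ j, ((Matrix.diagonal α * W) - Matrix.diagonal α) k j
            = (Matrix.diagonal α * W) k j - Matrix.diagonal α k j := fun j => rfl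
        simp_rw [this, Finset.sum_sub_distrib, hS k]
        rw [Finset.sum_eq_single k]
        · simp
        · intro b _ hb; exact Matrix.diagonal_apply_ne' _ hb
        · simp
      simp only [hz, mul_zero, Finset.sum_const_zero, add_zero]

lemma psi_nonneg {K : ℕ} {α : Fin n → ℝ} {W : Matrix (Fin n) (Fin n) ℝ}
    (hα : ∀ i, α i ∈ Set.Icc (0:ℝ) 1) (hWnn : ∀ i j, 0 ≤ W i j) (i j : Fin n) :
    0 ≤ Psi K α W i j := by
  have hSnn : ∀ i j, 0 ≤ (Matrix.diagonal α * W) i j :=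
    mul_nonneg' (fun i j => by
      rw [Matrix.diagonal_apply]; split <;> simp_all [(hα i).1]
      ) hWnn
  have hInn : ∀ i j, 0 ≤ ((1 : Matrix (Fin n) (Fin n) ℝ) - Matrix.diagonal α) i j := by
    intro i j
    have : ((1 : Matrix (Fin n) (Fin n) ℝ) - Matrix.diagonal α) i j
        = (1 : Matrix (Fin n) (Fin n) ℝ) i j - Matrix.diagonal α i j := rfl
    rw [this, Matrix.one_apply, Matrix.diagonal_apply]
    split <;> simp_all [(hα i).2, sub_nonneg]
  have h1 : 0 ≤ (∑ k ∈ Finset.range K, (Matrix.diagonal α * W) ^ k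
      * (1 - Matrix.diagonal α)) i j := by
    rw [Matrix.sum_apply]
    exact Finset.sum_nonneg fun k _ =>
      mul_nonneg' (pow_nonneg' hSnn k) hInn i j
  have h2 := pow_nonneg' hSnn K i j
  have : Psi K α W i j = (∑ k ∈ Finset.range K, (Matrix.diagonal α * W) ^ k
      * (1 - Matrix.diagonal α)) i j + ((Matrix.diagonal α * W) ^ K) i j := rfl
  rw [this]; linarith

end aux

/-- `ρ(Ψ_K Λ_β) ≤ max_i β_i`; in particular if `β_i < 1` for all
`i` then `ρ(Ψ_K Λ_β) < 1`. -/
theorem specRad_psi_diagonal_le {n : ℕ} (hn : 2 ≤ n) (G : SimpleGraph (Fin n))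
    [DecidableRel G.Adj] (hG : G.Connected) (K : ℕ) (hK : 1 ≤ K)
    (α β : Fin n → ℝ) (hα : ∀ i, α i ∈ Set.Icc (0 : ℝ) 1)
    (hβ : ∀ i, β i ∈ Set.Icc (0 : ℝ) 1) :
    (specRad (Psi K α (rowNormAdj G) * Matrix.diagonal β) ≤ ⨆ i, β i) ∧
      ((∀ i, β i < 1) → specRad (Psi K α (rowNormAdj G) * Matrix.diagonal β) < 1) := by
  have hne : Nonempty (Fin n) := ⟨⟨0, by omega⟩⟩
  -- degrees positive
  have hdeg : ∀ i : Fin n, 0 < G.degree i := by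
    intro i
    have : Nontrivial (Fin n) := Fin.nontrivial_iff_two_le.mpr hn
    obtain ⟨j, hj⟩ := exists_ne i
    rw [SimpleGraph.degree_pos_iff_exists_adj]
    obtain ⟨w⟩ := hG.preconnected i j
    have hnil : ¬ w.Nil := SimpleGraph.Walk.not_nil_of_ne hj.symm
    exact ⟨_, w.adj_snd hnil⟩
  set W := rowNormAdj G with hWdef
  have hWnn : ∀ i j, 0 ≤ W i j := by
    intro i j
    simp only [hWdef, rowNormAdj, Matrix.of_apply]
    have h0 : (0:ℝ) ≤ (G.adjMatrix ℝ) i j := by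
      rw [SimpleGraph.adjMatrix_apply]; split <;> norm_num
    exact div_nonneg h0 (Nat.cast_nonneg _)
  have hWrs : ∀ i, ∑ j, W i j = 1 := by
    intro i
    simp only [hWdef, rowNormAdj, Matrix.of_apply]
    rw [← Finset.sum_div]
    have := SimpleGraph.adjMatrix_mulVec_const_apply (α := ℝ) (G := G) (a := 1) (v := i)
    simp only [Matrix.mulVec, dotProduct, Function.const_apply, mul_one] at this
    rw [this]
    exact div_self (by exact_mod_cast (hdeg i).ne')
  -- bound on sup
  have hBub : BddAbove (Set.range β) := (Set.finite_range β).bddAbove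
  set B := ⨆ i, β i with hB
  have hβB : ∀ j, β j ≤ B := fun j => le_ciSup hBub j
  have hB0 : 0 ≤ B := le_trans (hβ (Classical.arbitrary _)).1 (hβB _)
  set M := Psi K α W * Matrix.diagonal β with hM
  -- row sums of |M|
  have hMrs : ∀ i, ∑ j, |M i j| ≤ B := by
    intro i
    have hMapp : ∀ j, M i j = Psi K α W i j * β j := by
      intro j
      rw [hM, Matrix.mul_apply, Finset.sum_eq_single j]
      · rw [Matrix.diagonal_apply_eq]
      · intro b _ hb; rw [Matrix.diagonal_apply_ne _ hb, mul_zero]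
      · simp
    calc ∑ j, |M i j| = ∑ j, Psi K α W i j * β j := by
          refine Finset.sum_congr rfl fun j _ => ?_
          rw [hMapp j, abs_of_nonneg (mul_nonneg (psi_nonneg hα hWnn i j) (hβ j).1)]
      _ ≤ ∑ j, Psi K α W i j * B :=
          Finset.sum_le_sum fun j _ =>
            mul_le_mul_of_nonneg_left (hβB j) (psi_nonneg hα hWnn i j)
      _ = B := by rw [← Finset.sum_mul, psi_rowsum hWrs i, one_mul]
  -- spectral radius bound via linfty operator norm
  letI : NormedRing (Matrix (Fin n) (Fin n) ℂ) := Matrix.linftyOpNormedRing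
  letI : NormedAlgebra ℂ (Matrix (Fin n) (Fin n) ℂ) := Matrix.linftyOpNormedAlgebra
  have hnormle : ‖M.map Complex.ofReal‖ ≤ B := by
    rw [Matrix.linfty_opNorm_def, ← Real.coe_toNNReal B hB0, NNReal.coe_le_coe]
    refine Finset.sup_le fun i _ => ?_
    rw [← NNReal.coe_le_coe, NNReal.coe_sum, Real.coe_toNNReal B hB0]
    refine le_trans (le_of_eq ?_) (hMrs i)
    refine Finset.sum_congr rfl fun j _ => ?_
    simp [Matrix.map_apply, Real.norm_eq_abs]
  have main : specRad M ≤ B := by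
    apply Real.sSup_le _ hB0
    rintro x ⟨z, hz, rfl⟩
    have h1 : ‖z‖ ≤ ‖M.map Complex.ofReal‖ := spectrum.norm_le_norm_of_mem hz
    exact le_trans h1 hnormle
  refine ⟨main, fun h => lt_of_le_of_lt main ?_⟩
  obtain ⟨i0, hi0⟩ := Finite.exists_max β
  exact lt_of_le_of_lt (ciSup_le hi0) (h i0)
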